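/- arXiv:0812.4390 — 2 statements merged into one kernel-verified Lean document; each statement's English description precedes it below -/
import Mathlib

section
/- Let x₁, x₂ ∈ ℝ^d and let e₁, e₂ be unit vectors. Define the half-balls B⁺(xᵢ, eᵢ) = {y ∈ B_R(xᵢ) : (y − xᵢ)·eᵢ ≥ 0}. Then there exists a constant K > 0 depending only on d and R such that L^d(B⁺(x₁,e₁) △ B⁺(x₂,e₂)) ≤ K(|x₂ − x₁| + |e₂ − e₁|), where △ denotes symmetric difference. -/
open MeasureTheory
open scoped RealInnerProductSpace

/-- The half-ball of radius `R` centered at `x` in the direction `e`. -/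
def halfBall {d : ℕ} (R : ℝ) (x e : EuclideanSpace ℝ (Fin d)) :
    Set (EuclideanSpace ℝ (Fin d)) :=
  {y ∈ Metric.closedBall x R | 0 ≤ ⟪y - x, e⟫}

set_option maxHeartbeats 1000000

lemma pow_sub_pow_le_aux (n : ℕ) {a b c : ℝ} (hb : 0 ≤ b) (hba : b ≤ a) (hac : a ≤ c) :
    a ^ (n+1) - b ^ (n+1) ≤ (n+1) * c ^ n * (a - b) := by
  induction n with
  | zero => simp
  | succ n ih =>
    have hc : 0 ≤ c := le_trans (hb.trans hba) hac
    have h1 : a ^ (n+2) - b ^ (n+2) = a * (a ^ (n+1) - b ^ (n+1)) + (a - b) * b ^ (n+1) := by ring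
    have h2 : a * (a ^ (n+1) - b ^ (n+1)) ≤ c * ((n+1) * c ^ n * (a - b)) := by
      have := mul_le_mul hac ih (by nlinarith [pow_le_pow_left₀ hb hba (n+1)]) hc
      nlinarith [pow_nonneg (hb.trans hba) (n+1), sub_nonneg.mpr hba, ih,
        mul_le_mul_of_nonneg_left ih (le_trans (hb.trans hba) hac)]
    have h3 : (a - b) * b ^ (n+1) ≤ (a - b) * c ^ (n+1) := by
      apply mul_le_mul_of_nonneg_left (pow_le_pow_left₀ hb (hba.trans hac) _) (sub_nonneg.mpr hba)
    have h4 : c * ((n+1) * c ^ n * (a-b)) = ((n:ℝ)+1) * c^(n+1) * (a-b) := by ring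
    push_cast
    nlinarith [h1, h2, h3]


lemma slab_bound {d : ℕ} (hd : 0 < d) {R δ : ℝ} (hR : 0 ≤ R) (hδ : 0 ≤ δ)
    (x e : EuclideanSpace ℝ (Fin d)) (he : ‖e‖ = 1) :
    volume {y : EuclideanSpace ℝ (Fin d) | ‖y - x‖ ≤ R ∧ ⟪y - x, e⟫ ∈ Set.Icc 0 δ} ≤
      ENNReal.ofReal (δ * (2*R)^(d-1)) := by
  set i₀ : Fin d := ⟨0, hd⟩
  set v : EuclideanSpace ℝ (Fin d) := EuclideanSpace.single i₀ (1:ℝ) with hv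
  have hvn : ‖e‖ = ‖v‖ := by simp [hv, he]
  set f := Submodule.reflection (ℝ ∙ (e - v))ᗮ with hf
  have hfe : f e = v := Submodule.reflection_sub hvn
  have hwv : ∀ w : EuclideanSpace ℝ (Fin d), ⟪w, v⟫ = w i₀ := by
    intro w; simp [hv, EuclideanSpace.inner_single_right]
  set S' : Set (EuclideanSpace ℝ (Fin d)) := {w | ‖w‖ ≤ R ∧ w i₀ ∈ Set.Icc 0 δ} with hS'
  have hmeas : MeasurableSet S' := by
    have : S' = (Metric.closedBall (0:EuclideanSpace ℝ (Fin d)) R) ∩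
        ((fun w : EuclideanSpace ℝ (Fin d) => w i₀) ⁻¹' Set.Icc 0 δ) := by
      ext w; simp [hS', Metric.mem_closedBall, dist_zero_right]
    rw [this]
    exact Metric.isClosed_closedBall.measurableSet.inter
      (((measurable_pi_apply i₀).comp (MeasurableEquiv.toLp 2 (Fin d → ℝ)).symm.measurable) measurableSet_Icc)
  -- step: set = (fun y => f (y - x)) ⁻¹' S'
  have hset : {y : EuclideanSpace ℝ (Fin d) | ‖y - x‖ ≤ R ∧ ⟪y - x, e⟫ ∈ Set.Icc 0 δ} =
      (fun y => f (y - x)) ⁻¹' S' := by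
    ext y
    have h1 : ‖f (y - x)‖ = ‖y - x‖ := f.norm_map _
    have h2 : (f (y - x)) i₀ = ⟪y - x, e⟫ := by
      rw [← hwv (f (y - x)), ← hfe, LinearIsometryEquiv.inner_map_map]
    simp only [Set.mem_setOf_eq, Set.mem_preimage, hS']
    rw [h1, h2]
  have hmp : MeasurePreserving (fun y : EuclideanSpace ℝ (Fin d) => f (y - x)) volume volume :=
    f.measurePreserving.comp (measurePreserving_sub_right volume x)
  rw [hset, hmp.measure_preimage hmeas.nullMeasurableSet]
  -- now bound volume S' by box
  set F : Fin d → Set ℝ := fun j => if j = i₀ then Set.Icc 0 δ else Set.Icc (-R) R with hF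
  have hsub : S' ⊆ (MeasurableEquiv.toLp 2 (Fin d → ℝ)).symm ⁻¹' (Set.pi Set.univ F) := by
    intro w hw
    simp only [Set.mem_preimage, Set.mem_pi, Set.mem_univ, true_imp_iff]
    intro j
    have habs : |w j| ≤ ‖w‖ := by
      have h1 : ⟪w, EuclideanSpace.single j (1:ℝ)⟫ = w j := by
        simp [EuclideanSpace.inner_single_right]
      have := abs_real_inner_le_norm w (EuclideanSpace.single j (1:ℝ))
      simpa [h1] using this
    have hwj : |w j| ≤ R := habs.trans hw.1
    have : (MeasurableEquiv.toLp 2 (Fin d → ℝ)).symm w j = w j := rfl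
    rw [this, hF]
    by_cases hj : j = i₀
    · subst hj; simp only [if_pos rfl]; exact hw.2
    · simp only [if_neg hj]
      exact abs_le.mp hwj |> fun ⟨h1', h2'⟩ => ⟨h1', h2'⟩
  calc volume S' ≤ volume ((MeasurableEquiv.toLp 2 (Fin d → ℝ)).symm ⁻¹' (Set.pi Set.univ F)) :=
        measure_mono hsub
    _ = volume (Set.pi Set.univ F) :=
        (EuclideanSpace.volume_preserving_symm_measurableEquiv_toLp (Fin d)).measure_preimage
          (MeasurableSet.univ_pi (fun j => by
            rw [hF]; dsimp only; split <;> exact measurableSet_Icc)).nullMeasurableSet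
    _ = ∏ j, volume (F j) := volume_pi_pi F
    _ = ENNReal.ofReal (δ * (2*R)^(d-1)) := by
        rw [← Finset.mul_prod_erase Finset.univ _ (Finset.mem_univ i₀)]
        have hF1 : F i₀ = Set.Icc 0 δ := if_pos rfl
        have h1 : volume (F i₀) = ENNReal.ofReal δ := by rw [hF1, Real.volume_Icc, sub_zero]
        have h2 : ∀ j ∈ Finset.univ.erase i₀, volume (F j) = ENNReal.ofReal (2*R) := by
          intro j hj
          have hFj : F j = Set.Icc (-R) R := if_neg (Finset.ne_of_mem_erase hj)
          rw [hFj, Real.volume_Icc]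
          norm_num
          ring_nf
          rw [ENNReal.ofReal_mul' (by norm_num), ENNReal.ofReal_ofNat]
        rw [h1, Finset.prod_congr rfl h2, Finset.prod_const]
        rw [Finset.card_erase_of_mem (Finset.mem_univ i₀), Finset.card_univ, Fintype.card_fin]
        rw [← ENNReal.ofReal_pow (by linarith), ← ENNReal.ofReal_mul hδ]

open Metric in
lemma annulus_bound {d : ℕ} (hd : 0 < d) {R h : ℝ} (hR : 0 < R) (hh : 0 ≤ h) (hhR : h ≤ R)
    (x : EuclideanSpace ℝ (Fin d)) :
    volume (closedBall x (R+h) \ closedBall x R) ≤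
      ENNReal.ofReal (((d:ℝ) * (2*R)^(d-1) *
        (volume (ball (0:EuclideanSpace ℝ (Fin d)) 1)).toReal) * h) := by
  obtain ⟨n, rfl⟩ : ∃ n, d = n + 1 := ⟨d - 1, (Nat.succ_pred_eq_of_pos hd).symm⟩
  set V := volume (ball (0:EuclideanSpace ℝ (Fin (n+1)))  1) with hV
  have hVfin : V ≠ ⊤ := measure_ball_lt_top.ne
  have hVr : V = ENNReal.ofReal V.toReal := (ENNReal.ofReal_toReal hVfin).symm
  have hdiff : volume (closedBall x (R+h) \ closedBall x R) =
      volume (closedBall x (R+h)) - volume (closedBall x R) :=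
    measure_diff (closedBall_subset_closedBall (by linarith))
      measurableSet_closedBall.nullMeasurableSet measure_closedBall_lt_top.ne
  rw [hdiff, Measure.addHaar_closedBall volume x (by linarith : (0:ℝ) ≤ R + h),
    Measure.addHaar_closedBall volume x hR.le, finrank_euclideanSpace_fin]
  rw [tsub_le_iff_right]
  simp only [Nat.add_sub_cancel, Nat.cast_add, Nat.cast_one]
  have key : (R+h)^(n+1) ≤ ((n:ℝ)+1) * (2*R)^n * h + R^(n+1) := by
    have := pow_sub_pow_le_aux n (a := R + h) (b := R) (c := 2*R) hR.le (by linarith) (by linarith)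
    push_cast at this
    nlinarith [this]
  calc ENNReal.ofReal ((R+h)^(n+1)) * V
      ≤ ENNReal.ofReal (((n:ℝ)+1) * (2*R)^n * h + R^(n+1)) * V :=
        mul_le_mul_left (ENNReal.ofReal_le_ofReal key) V
    _ = ENNReal.ofReal (((n:ℝ)+1) * (2*R)^n * h) * V + ENNReal.ofReal (R^(n+1)) * V := by
        rw [ENNReal.ofReal_add (by positivity) (by positivity), add_mul]
    _ ≤ ENNReal.ofReal ((((n:ℝ)+1) * (2*R)^n * V.toReal) * h) + ENNReal.ofReal (R^(n+1)) * V := by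
        gcongr
        conv_lhs => rw [hVr]
        rw [← ENNReal.ofReal_mul (by positivity)]
        exact ENNReal.ofReal_le_ofReal (le_of_eq (by ring))

lemma halfBall_diff_subset {d : ℕ} (R : ℝ) (x₁ x₂ e₁ e₂ : EuclideanSpace ℝ (Fin d))
    (he₂ : ‖e₂‖ = 1) :
    halfBall R x₁ e₁ \ halfBall R x₂ e₂ ⊆
      (Metric.closedBall x₂ (R + ‖x₂ - x₁‖) \ Metric.closedBall x₂ R) ∪
      {y | ‖y - x₁‖ ≤ R ∧ ⟪y - x₁, e₁⟫ ∈ Set.Icc 0 (R * ‖e₂ - e₁‖ + ‖x₂ - x₁‖)} := by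
  rintro y ⟨⟨hy1, hy2⟩, hy3⟩
  rw [Metric.mem_closedBall, dist_eq_norm] at hy1
  by_cases hb : y ∈ Metric.closedBall x₂ R
  · -- then the inner product at x₂ must be negative
    right
    have hneg : ⟪y - x₂, e₂⟫ < 0 := by
      by_contra hcon
      push_neg at hcon
      exact hy3 ⟨hb, hcon⟩
    have hexp : ⟪y - x₁, e₁⟫ - ⟪y - x₂, e₂⟫ = ⟪y - x₁, e₁ - e₂⟫ + ⟪x₂ - x₁, e₂⟫ := by
      simp only [inner_sub_left, inner_sub_right]
      ring
    have h1 : ⟪y - x₁, e₁ - e₂⟫ ≤ R * ‖e₂ - e₁‖ := by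
      calc ⟪y - x₁, e₁ - e₂⟫ ≤ ‖y - x₁‖ * ‖e₁ - e₂‖ := real_inner_le_norm _ _
        _ ≤ R * ‖e₂ - e₁‖ := by
            rw [norm_sub_rev e₁ e₂]
            exact mul_le_mul_of_nonneg_right hy1 (norm_nonneg _)
    have h2 : ⟪x₂ - x₁, e₂⟫ ≤ ‖x₂ - x₁‖ := by
      calc ⟪x₂ - x₁, e₂⟫ ≤ ‖x₂ - x₁‖ * ‖e₂‖ := real_inner_le_norm _ _
        _ = ‖x₂ - x₁‖ := by rw [he₂, mul_one]
    exact ⟨hy1, hy2, by linarith⟩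
  · left
    refine ⟨Metric.mem_closedBall.mpr ?_, hb⟩
    rw [dist_eq_norm]
    calc ‖y - x₂‖ = ‖(y - x₁) + (x₁ - x₂)‖ := by abel_nf
      _ ≤ ‖y - x₁‖ + ‖x₁ - x₂‖ := norm_add_le _ _
      _ ≤ R + ‖x₂ - x₁‖ := by rw [norm_sub_rev x₁ x₂]; exact add_le_add_left hy1 _

theorem stmt_14 {d : ℕ} (R : ℝ) (hR : 0 < R) :
    ∃ K > (0 : ℝ), ∀ x₁ x₂ e₁ e₂ : EuclideanSpace ℝ (Fin d), ‖e₁‖ = 1 → ‖e₂‖ = 1 →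
      volume ((halfBall R x₁ e₁ \ halfBall R x₂ e₂) ∪
              (halfBall R x₂ e₂ \ halfBall R x₁ e₁)) ≤
        ENNReal.ofReal (K * (‖x₂ - x₁‖ + ‖e₂ - e₁‖)) := by
  rcases Nat.eq_zero_or_pos d with hd | hd
  · subst hd
    refine ⟨1, one_pos, fun x₁ x₂ e₁ e₂ he₁ he₂ => ?_⟩
    exfalso
    have : ‖e₁‖ = 0 := by
      simp [EuclideanSpace.norm_eq]
    rw [he₁] at this; norm_num at this
  set V := volume (Metric.ball (0:EuclideanSpace ℝ (Fin d)) 1) with hV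
  have hVfin : V ≠ ⊤ := measure_ball_lt_top.ne
  set Vr := V.toReal with hVr
  have hVr0 : 0 ≤ Vr := ENNReal.toReal_nonneg
  have hVeq : V = ENNReal.ofReal Vr := (ENNReal.ofReal_toReal hVfin).symm
  set P : ℝ := (2*R)^(d-1) with hP
  have hP0 : 0 ≤ P := by positivity
  set Q : ℝ := R^(d-1) * Vr with hQ
  have hQ0 : 0 ≤ Q := by positivity
  set K : ℝ := 2*((d:ℝ)*P*Vr) + 2*((R+1)*P) + 2*Q + 1 with hK
  have hd1 : (1:ℝ) ≤ (d:ℝ) := by exact_mod_cast hd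
  have hK0 : 0 < K := by nlinarith [mul_nonneg (mul_nonneg (le_trans zero_le_one hd1) hP0) hVr0, mul_nonneg (mul_nonneg hR.le hP0) hVr0]
  refine ⟨K, hK0, fun x₁ x₂ e₁ e₂ he₁ he₂ => ?_⟩
  set h := ‖x₂ - x₁‖ with hh
  set ε := ‖e₂ - e₁‖ with hε
  have hh0 : 0 ≤ h := norm_nonneg _
  have hε0 : 0 ≤ ε := norm_nonneg _
  have hRd : volume (Metric.closedBall x₁ R) = ENNReal.ofReal (R ^ d) * V := by
    rw [Measure.addHaar_closedBall volume x₁ hR.le, finrank_euclideanSpace_fin]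
  have hRd2 : volume (Metric.closedBall x₂ R) = ENNReal.ofReal (R ^ d) * V := by
    rw [Measure.addHaar_closedBall volume x₂ hR.le, finrank_euclideanSpace_fin]
  by_cases hs : R ≤ h + ε
  · -- trivial case: bound by the two balls
    have hsub : (halfBall R x₁ e₁ \ halfBall R x₂ e₂) ∪ (halfBall R x₂ e₂ \ halfBall R x₁ e₁) ⊆
        Metric.closedBall x₁ R ∪ Metric.closedBall x₂ R := by
      rintro y (⟨⟨hy, _⟩, _⟩ | ⟨⟨hy, _⟩, _⟩)
      · exact Or.inl hy
      · exact Or.inr hy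
    calc volume _ ≤ volume (Metric.closedBall x₁ R ∪ Metric.closedBall x₂ R) :=
          measure_mono hsub
      _ ≤ volume (Metric.closedBall x₁ R) + volume (Metric.closedBall x₂ R) :=
          measure_union_le _ _
      _ = ENNReal.ofReal (R ^ d) * V + ENNReal.ofReal (R ^ d) * V := by rw [hRd, hRd2]
      _ ≤ ENNReal.ofReal (K * (h + ε)) := by
          rw [hVeq, ← ENNReal.ofReal_mul (by positivity), ← ENNReal.ofReal_add (by positivity) (by positivity)]
          apply ENNReal.ofReal_le_ofReal
          have hpow : R ^ d = R^(d-1) * R := by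
            conv_lhs => rw [← Nat.succ_pred_eq_of_pos hd]
            rw [pow_succ, Nat.pred_eq_sub_one]
          rw [hpow]
          have h1 : R^(d-1) * R * Vr ≤ Q * (h + ε) := by
            rw [hQ]
            calc R^(d-1) * R * Vr = (R^(d-1) * Vr) * R := by ring
              _ ≤ (R^(d-1) * Vr) * (h + ε) := mul_le_mul_of_nonneg_left hs hQ0
          nlinarith [mul_nonneg (mul_nonneg (mul_nonneg (le_trans zero_le_one hd1) hP0) hVr0) (add_nonneg hh0 hε0),
            mul_nonneg (mul_nonneg (add_nonneg hR.le zero_le_one) hP0) (add_nonneg hh0 hε0),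
            add_nonneg hh0 hε0]
  · push_neg at hs
    have hhR : h ≤ R := by linarith
    set δ : ℝ := R * ε + h with hδ
    have hδ0 : 0 ≤ δ := by positivity
    set A₁ := Metric.closedBall x₁ (R + h) \ Metric.closedBall x₁ R with hA₁
    set A₂ := Metric.closedBall x₂ (R + h) \ Metric.closedBall x₂ R with hA₂
    set S₁ := {y : EuclideanSpace ℝ (Fin d) | ‖y - x₁‖ ≤ R ∧ ⟪y - x₁, e₁⟫ ∈ Set.Icc 0 δ} with hS₁
    set S₂ := {y : EuclideanSpace ℝ (Fin d) | ‖y - x₂‖ ≤ R ∧ ⟪y - x₂, e₂⟫ ∈ Set.Icc 0 δ} with hS₂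
    have hsub1 : halfBall R x₁ e₁ \ halfBall R x₂ e₂ ⊆ A₂ ∪ S₁ := halfBall_diff_subset R x₁ x₂ e₁ e₂ he₂
    have hsub2 : halfBall R x₂ e₂ \ halfBall R x₁ e₁ ⊆ A₁ ∪ S₂ := by
      have := halfBall_diff_subset R x₂ x₁ e₂ e₁ he₁
      rwa [norm_sub_rev x₁ x₂, norm_sub_rev e₁ e₂] at this
    have hA1 : volume A₁ ≤ ENNReal.ofReal (((d:ℝ) * P * Vr) * h) :=
      annulus_bound hd hR hh0 hhR x₁
    have hA2 : volume A₂ ≤ ENNReal.ofReal (((d:ℝ) * P * Vr) * h) :=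
      annulus_bound hd hR hh0 hhR x₂
    have hS1 : volume S₁ ≤ ENNReal.ofReal (δ * P) := slab_bound hd hR.le hδ0 x₁ e₁ he₁
    have hS2 : volume S₂ ≤ ENNReal.ofReal (δ * P) := slab_bound hd hR.le hδ0 x₂ e₂ he₂
    calc volume ((halfBall R x₁ e₁ \ halfBall R x₂ e₂) ∪ (halfBall R x₂ e₂ \ halfBall R x₁ e₁))
        ≤ volume ((A₂ ∪ S₁) ∪ (A₁ ∪ S₂)) := measure_mono (Set.union_subset_union hsub1 hsub2)
      _ ≤ (volume A₂ + volume S₁) + (volume A₁ + volume S₂) :=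
          le_trans (measure_union_le _ _) (add_le_add (measure_union_le _ _) (measure_union_le _ _))
      _ ≤ (ENNReal.ofReal (((d:ℝ) * P * Vr) * h) + ENNReal.ofReal (δ * P)) +
          (ENNReal.ofReal (((d:ℝ) * P * Vr) * h) + ENNReal.ofReal (δ * P)) := by
          gcongr
      _ ≤ ENNReal.ofReal (K * (h + ε)) := by
          rw [← ENNReal.ofReal_add (by positivity) (by positivity),
            ← ENNReal.ofReal_add (by positivity) (by positivity)]
          apply ENNReal.ofReal_le_ofReal
          have key : δ * P ≤ (R+1)*P*(h+ε) := by nlinarith [mul_nonneg hP0 hε0, mul_nonneg hP0 hh0]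
          nlinarith [mul_nonneg (mul_nonneg (mul_nonneg (le_trans zero_le_one hd1) hP0) hVr0) hε0,
            mul_nonneg hQ0 (add_nonneg hh0 hε0), add_nonneg hh0 hε0,
            mul_nonneg (mul_nonneg (mul_nonneg (le_trans zero_le_one hd1) hP0) hVr0) hh0]
end

section
/- Let μ be a finite measure on ℝ^d bounded above by a multiple of Lebesgue measure, i.e., μ(E) ≤ M·L^d(E) for all Borel E. For x ∈ ℝ^d and a measurable family of sets A(x) ⊆ B_R(x), define ν(x) = (β/R) ∫_{A(x)} (x − y) dμ(y). If the sets satisfy L^d(A(x₁) △ A(x₂)) ≤ K|x₂ − x₁| for all x₁, x₂, then ν is Lipschitz continuous with constant at most (β/R)(μ(ℝ^d) + M·K·R + M·K·R) ≤ (β/R)(μ(ℝ^d) + 2MKR); in particular ν is Lipschitz. -/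
open MeasureTheory

theorem stmt_15 {d : ℕ} (β R M K : ℝ) (hβ : 0 < β) (hR : 0 < R) (hM : 0 < M) (hK : 0 < K)
    (μ : Measure (EuclideanSpace ℝ (Fin d))) [IsFiniteMeasure μ]
    (hμM : ∀ E : Set (EuclideanSpace ℝ (Fin d)), MeasurableSet E →
      μ E ≤ ENNReal.ofReal M * volume E)
    (A : EuclideanSpace ℝ (Fin d) → Set (EuclideanSpace ℝ (Fin d)))
    (hAmeas : ∀ x, MeasurableSet (A x))
    (hAsub : ∀ x, A x ⊆ Metric.closedBall x R)
    (hAdiff : ∀ x₁ x₂, volume ((A x₁ \ A x₂) ∪ (A x₂ \ A x₁)) ≤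
      ENNReal.ofReal (K * ‖x₂ - x₁‖))
    (ν : EuclideanSpace ℝ (Fin d) → EuclideanSpace ℝ (Fin d))
    (hν : ∀ x, ν x = (β / R) • ∫ y in A x, (x - y) ∂μ) :
    LipschitzWith (Real.toNNReal ((β / R) * ((μ Set.univ).toReal + 2 * M * K * R))) ν := by
  have hc : 0 ≤ (β / R) * ((μ Set.univ).toReal + 2 * M * K * R) := by positivity
  apply LipschitzWith.of_dist_le_mul
  intro x₂ x₁
  rw [Real.coe_toNNReal _ hc, dist_eq_norm, dist_eq_norm, hν, hν]
  set s := A x₁ with hsdef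
  set t := A x₂ with htdef
  have hs := hAmeas x₁
  have ht := hAmeas x₂
  have hfin : ∀ u : Set (EuclideanSpace ℝ (Fin d)), μ u ≠ ⊤ := fun u => (measure_lt_top μ u).ne
  -- integrability
  have hint : ∀ (x : EuclideanSpace ℝ (Fin d)) (u : Set (EuclideanSpace ℝ (Fin d))),
      MeasurableSet u → u ⊆ Metric.closedBall x R →
      IntegrableOn (fun y => x - y) u μ := by
    intro x u hu hsub
    apply Measure.integrableOn_of_bounded (M := R) (hfin u)
      ((continuous_const.sub continuous_id).aestronglyMeasurable)
    filter_upwards [ae_restrict_mem hu] with y hy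
    have := hsub hy
    rw [Metric.mem_closedBall] at this
    simpa [dist_eq_norm, norm_sub_rev] using this
  -- norm bound on pieces
  have key : ∀ (x : EuclideanSpace ℝ (Fin d)) (u : Set (EuclideanSpace ℝ (Fin d))),
      u ⊆ Metric.closedBall x R →
      ‖∫ y in u, (x - y) ∂μ‖ ≤ R * (μ u).toReal := by
    intro x u hsub
    apply norm_setIntegral_le_of_norm_le_const (measure_lt_top μ u)
    · intro y hy
      have := hsub hy
      rw [Metric.mem_closedBall] at this
      simpa [dist_eq_norm, norm_sub_rev] using this
  -- decomposition
  have h2 : ∫ y in t, (x₂ - y) ∂μ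
      = (∫ y in t ∩ s, (x₂ - y) ∂μ) + ∫ y in t \ s, (x₂ - y) ∂μ :=
    (integral_inter_add_diff hs (hint x₂ t ht (hAsub x₂))).symm
  have h1 : ∫ y in s, (x₁ - y) ∂μ
      = (∫ y in s ∩ t, (x₁ - y) ∂μ) + ∫ y in s \ t, (x₁ - y) ∂μ :=
    (integral_inter_add_diff ht (hint x₁ s hs (hAsub x₁))).symm
  have hcomm : t ∩ s = s ∩ t := Set.inter_comm t s
  have hmid : (∫ y in s ∩ t, (x₂ - y) ∂μ) - (∫ y in s ∩ t, (x₁ - y) ∂μ)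
      = (μ (s ∩ t)).toReal • (x₂ - x₁) := by
    rw [← integral_sub ((hint x₂ t ht (hAsub x₂)).mono_set Set.inter_subset_right)
      ((hint x₁ s hs (hAsub x₁)).mono_set Set.inter_subset_left)]
    have : ∀ y : EuclideanSpace ℝ (Fin d), (x₂ - y) - (x₁ - y) = x₂ - x₁ := by
      intro y; abel
    simp only [this]
    rw [setIntegral_const]
    rfl
  have hD : (β / R) • (∫ y in t, (x₂ - y) ∂μ) - (β / R) • (∫ y in s, (x₁ - y) ∂μ)
      = (β / R) • ((μ (s ∩ t)).toReal • (x₂ - x₁)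
          + (∫ y in t \ s, (x₂ - y) ∂μ) - (∫ y in s \ t, (x₁ - y) ∂μ)) := by
    rw [← smul_sub, h2, h1, hcomm]
    rw [← hmid]
    congr 1
    abel
  rw [hD]
  -- bound the three pieces
  have ha : ‖(μ (s ∩ t)).toReal • (x₂ - x₁)‖ ≤ (μ Set.univ).toReal * ‖x₂ - x₁‖ := by
    rw [norm_smul, Real.norm_eq_abs, abs_of_nonneg ENNReal.toReal_nonneg]
    exact mul_le_mul_of_nonneg_right
      (ENNReal.toReal_mono (hfin _) (measure_mono (Set.subset_univ _))) (norm_nonneg _)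
  have hvol : ∀ u : Set (EuclideanSpace ℝ (Fin d)), MeasurableSet u →
      volume u ≤ ENNReal.ofReal (K * ‖x₂ - x₁‖) → (μ u).toReal ≤ M * (K * ‖x₂ - x₁‖) := by
    intro u hu hv
    apply ENNReal.toReal_le_of_le_ofReal (by positivity)
    calc μ u ≤ ENNReal.ofReal M * volume u := hμM u hu
      _ ≤ ENNReal.ofReal M * ENNReal.ofReal (K * ‖x₂ - x₁‖) := by gcongr
      _ = ENNReal.ofReal (M * (K * ‖x₂ - x₁‖)) := by
          rw [ENNReal.ofReal_mul hM.le]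
  have hb : ‖∫ y in t \ s, (x₂ - y) ∂μ‖ ≤ R * (M * (K * ‖x₂ - x₁‖)) := by
    refine (key x₂ (t \ s) (fun y hy => hAsub x₂ hy.1)).trans ?_
    gcongr
    exact hvol _ (ht.diff hs) ((measure_mono Set.subset_union_right).trans (hAdiff x₁ x₂))
  have hc' : ‖∫ y in s \ t, (x₁ - y) ∂μ‖ ≤ R * (M * (K * ‖x₂ - x₁‖)) := by
    refine (key x₁ (s \ t) (fun y hy => hAsub x₁ hy.1)).trans ?_
    gcongr
    exact hvol _ (hs.diff ht) ((measure_mono Set.subset_union_left).trans (hAdiff x₁ x₂))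
  calc ‖(β / R) • ((μ (s ∩ t)).toReal • (x₂ - x₁)
          + (∫ y in t \ s, (x₂ - y) ∂μ) - (∫ y in s \ t, (x₁ - y) ∂μ))‖
      = (β / R) * ‖(μ (s ∩ t)).toReal • (x₂ - x₁)
          + (∫ y in t \ s, (x₂ - y) ∂μ) - (∫ y in s \ t, (x₁ - y) ∂μ)‖ := by
        rw [norm_smul, Real.norm_eq_abs, abs_of_nonneg (by positivity)]
    _ ≤ (β / R) * ((μ Set.univ).toReal * ‖x₂ - x₁‖
          + R * (M * (K * ‖x₂ - x₁‖)) + R * (M * (K * ‖x₂ - x₁‖))) := by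
        gcongr
        refine (norm_sub_le _ _).trans ?_
        gcongr
        exact (norm_add_le _ _).trans (by gcongr)
    _ = (β / R) * ((μ Set.univ).toReal + 2 * M * K * R) * ‖x₂ - x₁‖ := by ring
end
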